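/- The ring ℤ has enough homogeneous polynomials: for every n ≥ 1 and every finite set S ⊆ ℤ^n such that each tuple in S has coprime entries, there exists a nonconstant homogeneous polynomial f ∈ ℤ[x_1, ..., x_n] such that f(X) is a unit of ℤ for every X ∈ S. -/

import Mathlib

open MvPolynomial Finset
namespace IntEnough
variable {n : ℕ}

noncomputable def linForm (c : Fin n → ℤ) : MvPolynomial (Fin n) ℤ :=
  ∑ i, MvPolynomial.C (c i) * MvPolynomial.X i
lemma linForm_isHomogeneous (c : Fin n → ℤ) : (linForm c).IsHomogeneous 1 :=
  MvPolynomial.IsHomogeneous.sum _ _ _ fun i _ => isHomogeneous_C_mul_X (c i) i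
lemma eval_linForm (c Q : Fin n → ℤ) : eval Q (linForm c) = ∑ i, c i * Q i := by
  simp [linForm]
lemma exists_dual {Q : Fin n → ℤ} (hQ : Ideal.span (Set.range Q) = ⊤) :
    ∃ a : Fin n → ℤ, ∑ i, a i * Q i = 1 := by
  have h1 : (1:ℤ) ∈ Ideal.span (Set.range Q) := hQ ▸ Submodule.mem_top
  obtain ⟨a, ha⟩ := (Submodule.mem_span_range_iff_exists_fun ℤ).mp h1
  exact ⟨a, by simpa [smul_eq_mul] using ha⟩

noncomputable def dotL (Q : Fin n → ℤ) : (Fin n → ℤ) →ₗ[ℤ] ℤ :=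
  ∑ i, Q i • LinearMap.proj i
lemma dotL_apply (Q c : Fin n → ℤ) : dotL Q c = ∑ i, c i * Q i := by
  simp [dotL, mul_comm]
lemma eval_mul_smul {R : Type*} [CommRing R] {σ : Type*} {f : MvPolynomial σ R} {m : ℕ}
    (hf : f.IsHomogeneous m) (r : R) (x : σ → R) :
    eval (fun i => r * x i) f = r ^ m * eval x f := by
  rw [eval_eq, eval_eq, Finset.mul_sum]
  refine Finset.sum_congr rfl fun d hd => ?_
  have hdeg : ∑ i ∈ d.support, d i = m := by
    have h1 : Finsupp.degree d = m := by
      rw [Finsupp.degree_eq_weight_one]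
      exact hf (MvPolynomial.mem_support_iff.mp hd)
    exact h1
  simp only [mul_pow]
  rw [Finset.prod_mul_distrib, Finset.prod_pow_eq_pow_sum, hdeg]
  ring
lemma cast_eval {R S : Type*} [CommSemiring R] [CommSemiring S] (φ : R →+* S) {σ : Type*}
    (Q : σ → R) (F : MvPolynomial σ R) :
    φ (eval Q F) = eval (fun i => φ (Q i)) (MvPolynomial.map φ F) := by
  have h := MvPolynomial.eval₂_comp_left φ (RingHom.id R) Q F
  rw [MvPolynomial.eval₂_id] at h
  rw [h, RingHom.comp_id, MvPolynomial.eval₂_eq_eval_map]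
  rfl

lemma claim_point {Q Q₀ : Fin n → ℤ} {F : MvPolynomial (Fin n) ℤ} {D : ℕ}
    (hFhom : F.IsHomogeneous D) (hFQ : eval Q F = 1)
    (a : Fin n → ℤ) (ha : ∑ i, a i * Q i = 1)
    (b : Fin n → ℤ) (hb : ∑ i, b i * Q₀ i = 1)
    (hv : eval Q₀ F * eval Q₀ F ≠ 1) :
    ∃ c : Fin n → ℤ, (∑ i, c i * Q i = 0) ∧ (∑ i, c i * Q₀ i ≠ 0) ∧
      ∀ p : ℕ, p.Prime → (p:ℤ) ∣ (∑ i, c i * Q₀ i) → ¬ (p:ℤ) ∣ eval Q₀ F := by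
  classical
  set v : ℤ := eval Q₀ F with hv_def
  set I : Ideal ℤ := Submodule.map (dotL Q₀) (LinearMap.ker (dotL Q)) with hI
  haveI hIp : I.IsPrincipal := IsPrincipalIdealRing.principal I
  set g : ℤ := Submodule.IsPrincipal.generator I with hg
  obtain ⟨c, hcker, hcval⟩ := Submodule.IsPrincipal.generator_mem I
  have hcQ : ∑ i, c i * Q i = 0 := by
    have h := LinearMap.mem_ker.mp hcker
    rwa [dotL_apply] at h
  have hcg : ∑ i, c i * Q₀ i = g := by rw [← dotL_apply]; exact hcval
  have hminor : ∀ i j : Fin n, g ∣ (Q j * Q₀ i - Q i * Q₀ j) := by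
    intro i j
    have hmem : (Q j * Q₀ i - Q i * Q₀ j) ∈ I := by
      refine Submodule.mem_map.mpr
        ⟨(fun k => Q j * (if k = i then (1:ℤ) else 0) - Q i * (if k = j then 1 else 0)), ?_, ?_⟩
      · rw [LinearMap.mem_ker, dotL_apply]
        simp [sub_mul, mul_sub, Finset.sum_sub_distrib, mul_ite, ite_mul,
          Finset.sum_ite_eq, Finset.sum_ite_eq', mul_comm]
      · rw [dotL_apply]
        simp [sub_mul, mul_sub, Finset.sum_sub_distrib, mul_ite, ite_mul,
          Finset.sum_ite_eq, Finset.sum_ite_eq', mul_comm]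
    rw [← Ideal.span_singleton_generator I] at hmem
    exact Ideal.mem_span_singleton.mp hmem
  have hg0 : g ≠ 0 := by
    intro hg0
    have hm0 : ∀ i j, Q j * Q₀ i = Q i * Q₀ j := by
      intro i j
      have h := hminor i j
      rw [hg0, zero_dvd_iff, sub_eq_zero] at h
      exact h
    set t : ℤ := ∑ i, a i * Q₀ i with ht_def
    have hQ₀eq : ∀ j, Q₀ j = t * Q j := by
      intro j
      calc Q₀ j = (∑ i, a i * Q i) * Q₀ j := by rw [ha, one_mul]
        _ = ∑ i, a i * (Q i * Q₀ j) := by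
            rw [Finset.sum_mul]; exact Finset.sum_congr rfl fun i _ => mul_assoc _ _ _
        _ = ∑ i, a i * (Q j * Q₀ i) := Finset.sum_congr rfl fun i _ => by rw [hm0]
        _ = t * Q j := by
            rw [ht_def, Finset.sum_mul]
            exact Finset.sum_congr rfl fun i _ => by ring
    have ht : t * (∑ j, b j * Q j) = 1 := by
      rw [← hb, Finset.mul_sum]
      exact Finset.sum_congr rfl fun j _ => by rw [hQ₀eq j]; ring
    have htunit : t = 1 ∨ t = -1 := Int.isUnit_iff.mp (IsUnit.of_mul_eq_one _ ht)
    have hveq : v = t ^ D := by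
      rw [hv_def, show Q₀ = fun j => t * Q j from funext hQ₀eq,
        eval_mul_smul hFhom t Q, hFQ, mul_one]
    apply hv
    rw [hveq, ← pow_add]
    rcases htunit with h | h <;> rw [h]
    · exact one_pow _
    · exact Even.neg_one_pow ⟨D, rfl⟩
  have hp : ∀ p : ℕ, p.Prime → (p:ℤ) ∣ g → ¬ (p:ℤ) ∣ v := by
    intro p pp hpg hpv
    haveI : Fact p.Prime := ⟨pp⟩
    set φ : ℤ →+* ZMod p := Int.castRingHom (ZMod p) with hφ
    have hQbar : ∃ i₀, ((Q i₀ : ℤ) : ZMod p) ≠ 0 := by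
      by_contra hcon
      push_neg at hcon
      have h1 : ((1:ℤ) : ZMod p) = 0 := by
        rw [← ha]
        push_cast
        simp [hcon]
      simp at h1
    obtain ⟨i₀, hi₀⟩ := hQbar
    set lam : ZMod p := ((Q₀ i₀ : ℤ) : ZMod p) * ((Q i₀ : ℤ) : ZMod p)⁻¹ with hlam
    have hprop : ∀ j, ((Q₀ j : ℤ) : ZMod p) = lam * ((Q j : ℤ) : ZMod p) := by
      intro j
      have hpd : (p:ℤ) ∣ (Q j * Q₀ i₀ - Q i₀ * Q₀ j) := hpg.trans (hminor i₀ j)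
      have h2 := (ZMod.intCast_zmod_eq_zero_iff_dvd _ p).mpr hpd
      push_cast at h2
      have heq : ((Q j : ℤ) : ZMod p) * ((Q₀ i₀ : ℤ) : ZMod p)
          = ((Q i₀ : ℤ) : ZMod p) * ((Q₀ j : ℤ) : ZMod p) := by
        linear_combination h2
      refine mul_left_cancel₀ hi₀ ?_
      rw [hlam]
      field_simp
      linear_combination -heq
    have hlam0 : lam ≠ 0 := by
      intro h0
      have h1 : ((1:ℤ) : ZMod p) = 0 := by
        rw [← hb]
        push_cast
        simp [hprop, h0]
      simp at h1
    have hQeval : eval (fun i => ((Q i : ℤ) : ZMod p)) (MvPolynomial.map φ F) = 1 := by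
      have h3 := cast_eval φ Q F
      rw [hFQ] at h3
      simp only [hφ, map_one, Int.coe_castRingHom] at h3
      exact h3.symm
    have hvcast : φ v = lam ^ D := by
      rw [hv_def, cast_eval φ Q₀ F,
        show (fun i => φ (Q₀ i)) = fun i => lam * ((Q i : ℤ) : ZMod p) from
          funext fun j => by rw [hφ]; exact hprop j,
        eval_mul_smul (hFhom.map φ) lam _, hQeval, mul_one]
    have hz : φ v = 0 := by
      rw [hφ]
      exact (ZMod.intCast_zmod_eq_zero_iff_dvd v p).mpr hpv
    rw [hvcast] at hz
    exact pow_ne_zero D hlam0 hz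
  refine ⟨c, hcQ, ?_, ?_⟩
  · rw [hcg]; exact hg0
  · intro p pp hpd
    rw [hcg] at hpd
    exact hp p pp hpd

lemma key (hn : 1 ≤ n) (S : Finset (Fin n → ℤ)) :
    (∀ Q ∈ S, Ideal.span (Set.range Q) = ⊤) →
    ∃ (F : MvPolynomial (Fin n) ℤ) (D : ℕ), D ≠ 0 ∧ F.IsHomogeneous D ∧
      ∀ Q ∈ S, eval Q F = 1 := by
  classical
  induction S using Finset.induction_on with
  | empty =>
    intro _
    exact ⟨X ⟨0, hn⟩ ^ 2, 2, two_ne_zero, isHomogeneous_X_pow _ _, by simp⟩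
  | @insert Q₀ S hQ₀S IH =>
    intro hS
    have hSrest : ∀ Q ∈ S, Ideal.span (Set.range Q) = ⊤ :=
      fun Q hQ => hS Q (mem_insert_of_mem hQ)
    obtain ⟨F, D, hD, hFhom, hFval⟩ := IH hSrest
    by_cases hv : eval Q₀ F * eval Q₀ F = 1
    · refine ⟨F ^ 2, D * 2, Nat.mul_ne_zero hD two_ne_zero, hFhom.pow 2, ?_⟩
      intro Q hQ
      rcases Finset.mem_insert.mp hQ with rfl | hQ
      · rw [map_pow, pow_two, hv]
      · rw [map_pow, hFval Q hQ, one_pow]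
    · obtain ⟨b, hb⟩ := exists_dual (hS Q₀ (mem_insert_self _ _))
      have claim : ∀ Q, ∃ c : Fin n → ℤ, Q ∈ S →
          (∑ i, c i * Q i = 0) ∧ (∑ i, c i * Q₀ i ≠ 0) ∧
          (∀ p : ℕ, p.Prime → (p:ℤ) ∣ (∑ i, c i * Q₀ i) → ¬ (p:ℤ) ∣ eval Q₀ F) := by
        intro Q
        by_cases hQS : Q ∈ S
        · obtain ⟨a, ha⟩ := exists_dual (hSrest Q hQS)
          obtain ⟨c, hc⟩ := claim_point hFhom (hFval Q hQS) a ha b hb hv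
          exact ⟨c, fun _ => hc⟩
        · exact ⟨0, fun h => absurd h hQS⟩
      choose c hc using claim
      set v : ℤ := eval Q₀ F with hv_def
      set L : MvPolynomial (Fin n) ℤ := linForm b with hL
      set H : MvPolynomial (Fin n) ℤ := L ^ 2 * ∏ Q ∈ S, (linForm (c Q)) ^ 2 with hH
      set E : ℕ := 2 + 2 * S.card with hE
      have hE0 : E ≠ 0 := by omega
      have hHhom : H.IsHomogeneous E := by
        have h2 : (∏ Q ∈ S, (linForm (c Q)) ^ 2).IsHomogeneous (∑ _Q ∈ S, 2) :=
          IsHomogeneous.prod S _ _ fun Q _ => by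
            simpa using (linForm_isHomogeneous (c Q)).pow 2
        have h1 : (L ^ 2).IsHomogeneous 2 := by
          simpa using (linForm_isHomogeneous b).pow 2
        have h3 := h1.mul h2
        simpa [Finset.sum_const, smul_eq_mul, hE, mul_comm] using h3
      have hLQ₀ : eval Q₀ L = 1 := by rw [hL, eval_linForm, hb]
      set h : ℤ := ∏ Q ∈ S, (∑ i, c Q i * Q₀ i) ^ 2 with hh
      have hHQ₀ : eval Q₀ H = h := by
        rw [hH, map_mul, map_pow, hLQ₀, one_pow, one_mul, map_prod, hh]
        exact Finset.prod_congr rfl fun Q _ => by rw [map_pow, eval_linForm]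
      have hpos : 0 < h := by
        rw [hh]
        exact Finset.prod_pos fun Q hQ =>
          lt_of_le_of_ne (sq_nonneg _) (Ne.symm (pow_ne_zero 2 ((hc Q hQ).2.1)))
      have hHQ : ∀ Q ∈ S, eval Q H = 0 := by
        intro Q hQ
        rw [hH, map_mul, map_prod]
        rw [Finset.prod_eq_zero hQ (by rw [map_pow, eval_linForm, (hc Q hQ).1, zero_pow two_ne_zero]),
          mul_zero]
      set m : ℕ := h.toNat with hm
      have hmz : (m : ℤ) = h := Int.toNat_of_nonneg hpos.le
      have hm0 : m ≠ 0 := by omega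
      haveI : NeZero m := ⟨hm0⟩
      have hcop : Int.gcd v h = 1 := by
        by_contra hne
        obtain ⟨p, pp, hpdvd⟩ := Nat.exists_prime_and_dvd hne
        have hpv : (p:ℤ) ∣ v := dvd_trans (Int.natCast_dvd_natCast.mpr hpdvd) (Int.gcd_dvd_left _ _)
        have hph : (p:ℤ) ∣ h := dvd_trans (Int.natCast_dvd_natCast.mpr hpdvd) (Int.gcd_dvd_right _ _)
        have hprime : Prime (p:ℤ) := Nat.prime_iff_prime_int.mp pp
        rw [hh] at hph
        obtain ⟨Q, hQ, hpf⟩ := (Prime.dvd_finset_prod_iff hprime _).mp hph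
        exact (hc Q hQ).2.2 p pp (hprime.dvd_of_dvd_pow hpf) hpv
      have hunit : IsUnit (v : ZMod m) := by
        obtain ⟨x, y, hxy⟩ := Int.isCoprime_iff_gcd_eq_one.mpr hcop
        have hcast : ((x * v + y * h : ℤ) : ZMod m) = 1 := by rw [hxy]; simp
        push_cast at hcast
        have hh0 : ((h : ℤ) : ZMod m) = 0 := by
          rw [← hmz]
          exact_mod_cast ZMod.natCast_self m
        rw [hh0, mul_zero, add_zero] at hcast
        exact IsUnit.of_mul_eq_one _ (by rw [mul_comm]; exact hcast)
      set β : ℕ := m.totient with hβ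
      have hβ0 : β ≠ 0 := (Nat.totient_pos.mpr (Nat.pos_of_ne_zero hm0)).ne'
      have heuler : h ∣ v ^ β - 1 := by
        have h1 := congrArg Units.val (ZMod.pow_totient hunit.unit)
        rw [Units.val_pow_eq_pow_val, IsUnit.unit_spec, Units.val_one] at h1
        have h2 : ((v ^ β - 1 : ℤ) : ZMod m) = 0 := by
          push_cast
          rw [h1, sub_self]
        rw [← hmz]
        exact (ZMod.intCast_zmod_eq_zero_iff_dvd _ m).mp h2
      set α : ℕ := β * E with hα
      have hdvd : h ∣ v ^ α - 1 := by
        refine heuler.trans ?_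
        have h1 := sub_dvd_pow_sub_pow (v ^ β) 1 E
        rw [one_pow, ← pow_mul] at h1
        exact h1
      obtain ⟨w, hw⟩ := hdvd
      have hEle : E ≤ D * α := by
        have h1 : 1 ≤ D * β := Nat.one_le_iff_ne_zero.mpr (Nat.mul_ne_zero hD hβ0)
        calc E = 1 * E := (one_mul E).symm
          _ ≤ D * β * E := Nat.mul_le_mul_right E h1
          _ = D * α := by rw [hα, mul_assoc]
      refine ⟨F ^ α - C w * (H * L ^ (D * α - E)), D * α,
        Nat.mul_ne_zero hD (Nat.mul_ne_zero hβ0 hE0), ?_, ?_⟩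
      · have h1 : (F ^ α).IsHomogeneous (D * α) := hFhom.pow α
        have h3 : (L ^ (D * α - E)).IsHomogeneous (D * α - E) := by
          simpa using (linForm_isHomogeneous b).pow _
        have h5 := (isHomogeneous_C _ w).mul (hHhom.mul h3)
        rw [zero_add, Nat.add_sub_cancel' hEle] at h5
        exact h1.sub h5
      · intro Q hQ
        rcases Finset.mem_insert.mp hQ with rfl | hQ
        · rw [map_sub, map_pow, map_mul, eval_C, map_mul, map_pow, hHQ₀, hLQ₀, one_pow, mul_one,
            ← hv_def]
          linear_combination hw
        · rw [map_sub, map_pow, map_mul, eval_C, map_mul, hHQ Q hQ, zero_mul, mul_zero, sub_zero,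
            hFval Q hQ, one_pow]

end IntEnough



/-- A commutative ring `R` has enough homogeneous polynomials if for every `n ≥ 1`
and every finite set `S ⊆ R^n` whose tuples have coprime entries, there is a
nonconstant homogeneous polynomial taking unit values on `S`. -/
def HasEnoughHomogeneousPolynomials (R : Type*) [CommRing R] : Prop :=
  ∀ n : ℕ, 1 ≤ n → ∀ S : Finset (Fin n → R),
    (∀ Q ∈ S, Ideal.span (Set.range Q) = ⊤) →
    ∃ (f : MvPolynomial (Fin n) R) (d : ℕ), 1 ≤ d ∧ f.IsHomogeneous d ∧
      ∀ Q ∈ S, IsUnit (MvPolynomial.eval Q f)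


/-- The ring ℤ has enough homogeneous polynomials. -/
theorem int_hasEnoughHomogeneousPolynomials :
    HasEnoughHomogeneousPolynomials ℤ := by
  intro n hn S hS
  obtain ⟨F, D, hD, hhom, hval⟩ := IntEnough.key hn S hS
  exact ⟨F, D, Nat.one_le_iff_ne_zero.mpr hD, hhom,
    fun Q hQ => by rw [hval Q hQ]; exact isUnit_one⟩
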